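/- Fix a real 𝔞 > 10 and β ≥ 1, and set λ = 𝔞/2 + 5. There exists a constant c > 0 (depending only on 𝔞 and β) such that for every κ ∈ (0,1], every square-summable a : ℤ² → ℂ with a(0) = 0 that is not identically zero, and every integer M ≥ max(2, M^{(β)}(a)), setting T = λ κ^{−1} M^{−2} log M, one has: ∑_{ℓ∈ℤ², 0<|ℓ|≤1} ∑_{k∈ℤ²∖{0}, k≠ℓ} ⟨ℓ,k⊥⟩² · |a(ℓ−k)|² · |k|^{−(𝔞+2)} · ∫₀ᵀ ( ∫ₛᵀ e^{−κ|ℓ|²(T−r)} e^{−κ|ℓ−k|² r} e^{−|k|²(r−s)} dr )² ds ≥ c κ^{−1} M^{−6} ∑_{m∈ℤ²∖{0}} |m|^{−𝔞} |a(m)|². -/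

import Mathlib

open scoped ENNReal
open MeasureTheory intervalIntegral

/-- Squared Euclidean norm of a lattice point `k ∈ ℤ²`. -/
noncomputable def nsq (k : ℤ × ℤ) : ℝ := (k.1 : ℝ) ^ 2 + (k.2 : ℝ) ^ 2

/-- Standard inner product on `ℝ²` of two lattice points. -/
noncomputable def dotp (k l : ℤ × ℤ) : ℝ := (k.1 : ℝ) * (l.1 : ℝ) + (k.2 : ℝ) * (l.2 : ℝ)

/-- The rotation `k⊥ = (k₂, −k₁)`. -/
def perp (k : ℤ × ℤ) : ℤ × ℤ := (k.2, -k.1)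

/-- The spectral `β`-quantile `M^{(β)}(a)`: the least `N ∈ ℕ`, `N ≥ 1`, such that
`∑_{|k|>N} |a k|² ≤ β² ∑_{0<|k|≤N} |a k|²`. -/
noncomputable def specQuantile (β : ℝ) (a : ℤ × ℤ → ℂ) : ℕ :=
  sInf {N : ℕ | 1 ≤ N ∧
    (∑' k : ℤ × ℤ, if (N : ℝ) ^ 2 < nsq k then ‖a k‖ ^ 2 else 0) ≤
      β ^ 2 * ∑' k : ℤ × ℤ, if k ≠ 0 ∧ nsq k ≤ (N : ℝ) ^ 2 then ‖a k‖ ^ 2 else 0}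


lemma core_integral (κ B nl nm nk T lam : ℝ) (hκ0 : 0 < κ) (hκ1 : κ ≤ 1)
    (hB : 4 ≤ B) (hnl0 : 0 ≤ nl) (hnl1 : nl ≤ 1) (hnm0 : 0 ≤ nm) (hnm : nm ≤ B)
    (hnk0 : 0 ≤ nk) (hnk : nk ≤ 4 * B) (hlam : 0 < lam)
    (hT1 : (κ * B)⁻¹ / 12 ≤ T) (hT2 : κ * T ≤ lam) :
    Real.exp (-(2 * lam + 2)) / 13824 * (κ⁻¹ * (B ^ 3)⁻¹) ≤
      ∫ s in (0 : ℝ)..T,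
        (∫ r in s..T,
          Real.exp (-κ * nl * (T - r)) * Real.exp (-κ * nm * r) *
            Real.exp (-nk * (r - s))) ^ 2 := by
  have hB0 : (0:ℝ) < B := by linarith
  have hκB : 0 < κ * B := by positivity
  set s₀ : ℝ := (κ * B)⁻¹ / 24 with hs₀def
  set δ : ℝ := B⁻¹ / 24 with hδdef
  have hs₀ : 0 < s₀ := by positivity
  have hδ : 0 < δ := by positivity
  have hδs₀ : δ ≤ s₀ := by
    rw [hδdef, hs₀def, mul_inv]
    have h1 : (1:ℝ) ≤ κ⁻¹ := by
      have := mul_inv_cancel₀ (ne_of_gt hκ0)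
      nlinarith [inv_pos.mpr hκ0]
    have : B⁻¹ ≤ κ⁻¹ * B⁻¹ := by nlinarith [inv_pos.mpr hB0]
    linarith
  have hsumT : s₀ + δ ≤ T := by
    have : s₀ + δ ≤ 2 * s₀ := by linarith
    have h2 : 2 * s₀ = (κ * B)⁻¹ / 12 := by rw [hs₀def]; ring
    linarith
  have hT0 : 0 < T := lt_of_lt_of_le (by positivity) hT1
  set f : ℝ → ℝ → ℝ := fun s r =>
    Real.exp (-κ * nl * (T - r)) * Real.exp (-κ * nm * r) * Real.exp (-nk * (r - s))
    with hfdef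
  have hfpos : ∀ s r, 0 < f s r := fun s r => by rw [hfdef]; positivity
  set E : ℝ := Real.exp (-(lam + 1)) with hEdef
  have hE : 0 < E := Real.exp_pos _
  -- pointwise lower bound
  have hfE : ∀ s ∈ Set.Icc (0:ℝ) s₀, ∀ r ∈ Set.Icc s (s + δ), E ≤ f s r := by
    intro s hs r hr
    rw [hfdef]
    simp only
    rw [← Real.exp_add, ← Real.exp_add, hEdef]
    apply Real.exp_le_exp.mpr
    have hs0 : 0 ≤ s := hs.1
    have hss₀ : s ≤ s₀ := hs.2
    have hrs : s ≤ r := hr.1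
    have hrδ : r ≤ s + δ := hr.2
    have hr0 : 0 ≤ r := le_trans hs0 hrs
    have hrT : r ≤ T := by linarith
    have b1 : κ * nl * (T - r) ≤ lam := by
      have h1 : κ * nl * (T - r) ≤ κ * 1 * T := by
        have := mul_le_mul (mul_le_mul le_rfl hnl1 hnl0 hκ0.le)
          (by linarith : T - r ≤ T) (by linarith) (by positivity)
        linarith [this]
      linarith [hT2]
    have b2 : κ * nm * r ≤ 1 / 12 := by
      have h1 : κ * nm * r ≤ κ * B * (2 * s₀) := by
        apply mul_le_mul (mul_le_mul le_rfl hnm hnm0 hκ0.le) (by linarith) hr0 (by positivity)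
      have h2 : κ * B * (2 * s₀) = 1 / 12 := by
        rw [hs₀def]; field_simp; ring
      linarith
    have b3 : nk * (r - s) ≤ 1 / 6 := by
      have h1 : nk * (r - s) ≤ (4 * B) * δ := by
        apply mul_le_mul hnk (by linarith) (by linarith) (by positivity)
      have h2 : (4 * B) * δ = 1 / 6 := by rw [hδdef]; field_simp; ring
      linarith
    have : -κ * nl * (T - r) + -κ * nm * r + -nk * (r - s)
        = -(κ * nl * (T - r) + κ * nm * r + nk * (r - s)) := by ring
    rw [this]
    have : κ * nl * (T - r) + κ * nm * r + nk * (r - s) ≤ lam + 1 := by linarith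
    linarith
  -- integrability in r
  have hcont_r : ∀ s : ℝ, Continuous (f s) := by
    intro s; rw [hfdef]; fun_prop
  have hint_r : ∀ s a b : ℝ, IntervalIntegrable (f s) volume a b := fun s a b =>
    (hcont_r s).intervalIntegrable a b
  set inner : ℝ → ℝ := fun s => ∫ r in s..T, f s r with hinnerdef
  -- lower bound for inner
  have h_inner_lb : ∀ s ∈ Set.Icc (0:ℝ) s₀, δ * E ≤ inner s := by
    intro s hs
    have hsδT : s + δ ≤ T := by linarith [hs.2]
    have h1 : δ * E ≤ ∫ r in s..(s + δ), f s r := by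
      have heq : ∫ r in s..(s + δ), E = δ * E := by
        rw [intervalIntegral.integral_const]
        simp [smul_eq_mul]
      rw [← heq]
      exact intervalIntegral.integral_mono_on (by linarith)
        (intervalIntegrable_const) (hint_r s s (s + δ)) (fun r hr => hfE s hs r hr)
    have h2 : 0 ≤ ∫ r in (s + δ)..T, f s r :=
      intervalIntegral.integral_nonneg (by linarith) (fun r _ => (hfpos s r).le)
    have h3 : (∫ r in s..(s + δ), f s r) + ∫ r in (s + δ)..T, f s r = inner s :=
      intervalIntegral.integral_add_adjacent_intervals (hint_r s _ _) (hint_r s _ _)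
    linarith
  -- continuity of inner
  have h_inner_cont : Continuous inner := by
    set B1 : ℝ → ℝ := fun r =>
      Real.exp (-κ * nl * (T - r)) * Real.exp (-κ * nm * r) * Real.exp (-nk * r) with hB1def
    have hB1cont : Continuous B1 := by rw [hB1def]; fun_prop
    have hB1int : ∀ a b : ℝ, IntervalIntegrable B1 volume a b := fun a b =>
      hB1cont.intervalIntegrable a b
    have hkey : ∀ s, inner s = Real.exp (nk * s) *
        ((∫ r in (0:ℝ)..T, B1 r) - ∫ r in (0:ℝ)..s, B1 r) := by
      intro s
      have h1 : ∀ r, f s r = Real.exp (nk * s) * B1 r := by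
        intro r
        rw [hfdef, hB1def]
        simp only
        rw [← Real.exp_add, ← Real.exp_add, ← Real.exp_add, ← Real.exp_add]
        ring_nf
      have h2 : inner s = ∫ r in s..T, Real.exp (nk * s) * B1 r := by
        rw [hinnerdef]; simp only; exact intervalIntegral.integral_congr fun r _ => h1 r
      rw [h2, intervalIntegral.integral_const_mul]
      congr 1
      have := intervalIntegral.integral_add_adjacent_intervals (hB1int 0 s) (hB1int s T)
      linarith
    have : inner = fun s => Real.exp (nk * s) *
        ((∫ r in (0:ℝ)..T, B1 r) - ∫ r in (0:ℝ)..s, B1 r) := funext hkey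
    rw [this]
    have hP : Continuous fun s : ℝ => ∫ r in (0:ℝ)..s, B1 r :=
      intervalIntegral.continuous_primitive hB1int 0
    fun_prop
  have h_sq_int : ∀ a b : ℝ, IntervalIntegrable (fun s => (inner s) ^ 2) volume a b :=
    fun a b => ((h_inner_cont.pow 2).intervalIntegrable a b)
  -- final assembly
  have hstep1 : s₀ * (δ * E) ^ 2 ≤ ∫ s in (0:ℝ)..s₀, (inner s) ^ 2 := by
    have heq : ∫ s in (0:ℝ)..s₀, (δ * E) ^ 2 = s₀ * (δ * E) ^ 2 := by
      rw [intervalIntegral.integral_const]; simp [smul_eq_mul]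
    rw [← heq]
    apply intervalIntegral.integral_mono_on hs₀.le intervalIntegrable_const (h_sq_int 0 s₀)
    intro s hs
    have := h_inner_lb s hs
    have h0 : 0 ≤ δ * E := by positivity
    nlinarith
  have hstep2 : 0 ≤ ∫ s in s₀..T, (inner s) ^ 2 :=
    intervalIntegral.integral_nonneg (by linarith) (fun s _ => sq_nonneg _)
  have hadd : (∫ s in (0:ℝ)..s₀, (inner s) ^ 2) + ∫ s in s₀..T, (inner s) ^ 2
      = ∫ s in (0:ℝ)..T, (inner s) ^ 2 :=
    intervalIntegral.integral_add_adjacent_intervals (h_sq_int 0 s₀) (h_sq_int s₀ T)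
  have hval : Real.exp (-(2 * lam + 2)) / 13824 * (κ⁻¹ * (B ^ 3)⁻¹) = s₀ * (δ * E) ^ 2 := by
    have hexp : (Real.exp (-(lam + 1))) ^ 2 = Real.exp (-(2 * lam + 2)) := by
      rw [sq, ← Real.exp_add]; ring_nf
    rw [hs₀def, hδdef, hEdef, mul_pow, hexp, mul_inv]
    field_simp
    ring
  calc Real.exp (-(2 * lam + 2)) / 13824 * (κ⁻¹ * (B ^ 3)⁻¹) = s₀ * (δ * E) ^ 2 := hval
    _ ≤ ∫ s in (0:ℝ)..s₀, (inner s) ^ 2 := hstep1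
    _ ≤ ∫ s in (0:ℝ)..T, (inner s) ^ 2 := by linarith

noncomputable def chooseL (m : ℤ × ℤ) : ℤ × ℤ := if m.2 ^ 2 ≤ m.1 ^ 2 then (0, 1) else (1, 0)

lemma nsq_nonneg (k : ℤ × ℤ) : 0 ≤ nsq k := by unfold nsq; positivity

lemma one_le_nsq (m : ℤ × ℤ) (hm : m ≠ 0) : 1 ≤ nsq m := by
  have h : m.1 ≠ 0 ∨ m.2 ≠ 0 := by
    by_contra h; push_neg at h; exact hm (Prod.ext h.1 h.2)
  unfold nsq
  rcases h with h | h
  · have h1 : (1:ℝ) ≤ (m.1:ℝ)^2 := by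
      have : (1:ℤ) ≤ m.1^2 := by rcases h.lt_or_gt with h'|h' <;> nlinarith
      exact_mod_cast this
    nlinarith [sq_nonneg (m.2:ℝ)]
  · have h1 : (1:ℝ) ≤ (m.2:ℝ)^2 := by
      have : (1:ℤ) ≤ m.2^2 := by rcases h.lt_or_gt with h'|h' <;> nlinarith
      exact_mod_cast this
    nlinarith [sq_nonneg (m.1:ℝ)]

lemma chooseL_spec (m : ℤ × ℤ) (hm : m ≠ 0) :
    chooseL m ≠ 0 ∧ nsq (chooseL m) = 1 ∧ chooseL m - m ≠ 0 ∧ chooseL m - m ≠ chooseL m ∧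
      nsq m ≤ 2 * (dotp (chooseL m) (perp (chooseL m - m))) ^ 2 ∧
      nsq (chooseL m - m) ≤ 4 * nsq m := by
  have hm12 : m.1 ≠ 0 ∨ m.2 ≠ 0 := by
    by_contra h; push_neg at h; exact hm (Prod.ext h.1 h.2)
  unfold chooseL
  by_cases hc : m.2 ^ 2 ≤ m.1 ^ 2
  · rw [if_pos hc]
    have hm1 : m.1 ≠ 0 := by
      rcases hm12 with h | h
      · exact h
      · intro h0; rw [h0] at hc; nlinarith [sq_nonneg m.2, sq_abs m.2, abs_pos.mpr h]
    have hcR : (m.2:ℝ)^2 ≤ (m.1:ℝ)^2 := by exact_mod_cast hc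
    have h1R : (1:ℝ) ≤ (m.1:ℝ)^2 := by
      have : (1:ℤ) ≤ m.1^2 := by rcases hm1.lt_or_gt with h'|h' <;> nlinarith
      exact_mod_cast this
    refine ⟨by decide, by simp [nsq], ?_, ?_, ?_, ?_⟩
    · intro h
      have : ((0:ℤ),(1:ℤ)) = m := sub_eq_zero.mp h
      exact hm1 (by rw [← this])
    · intro h
      exact hm (by simpa using sub_eq_self.mp h)
    · show nsq m ≤ 2 * (dotp (0,1) (perp ((0,1) - m)))^2
      simp only [nsq, dotp, perp, Prod.fst_sub, Prod.snd_sub]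
      push_cast
      ring_nf
      nlinarith [hcR]
    · show nsq ((0,1) - m) ≤ 4 * nsq m
      simp only [nsq, Prod.fst_sub, Prod.snd_sub]
      push_cast
      nlinarith [sq_nonneg ((m.2:ℝ) + 1), hcR, h1R]
  · rw [if_neg hc]
    push_neg at hc
    have hm2 : m.2 ≠ 0 := by
      intro h0; rw [h0] at hc; nlinarith [sq_nonneg m.1]
    have hcR : (m.1:ℝ)^2 ≤ (m.2:ℝ)^2 := by
      have : m.1^2 ≤ m.2^2 := le_of_lt hc
      exact_mod_cast this
    have h1R : (1:ℝ) ≤ (m.2:ℝ)^2 := by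
      have : (1:ℤ) ≤ m.2^2 := by rcases hm2.lt_or_gt with h'|h' <;> nlinarith
      exact_mod_cast this
    refine ⟨by decide, by simp [nsq], ?_, ?_, ?_, ?_⟩
    · intro h
      have : ((1:ℤ),(0:ℤ)) = m := sub_eq_zero.mp h
      exact hm2 (by rw [← this])
    · intro h
      exact hm (by simpa using sub_eq_self.mp h)
    · show nsq m ≤ 2 * (dotp (1,0) (perp ((1,0) - m)))^2
      simp only [nsq, dotp, perp, Prod.fst_sub, Prod.snd_sub]
      push_cast
      ring_nf
      nlinarith [hcR]
    · show nsq ((1,0) - m) ≤ 4 * nsq m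
      simp only [nsq, Prod.fst_sub, Prod.snd_sub]
      push_cast
      nlinarith [sq_nonneg ((m.1:ℝ) + 1), hcR, h1R]

lemma g_inj : Function.Injective (fun m : ℤ × ℤ => (chooseL m, chooseL m - m)) := by
  intro m m' h
  simp only [Prod.mk.injEq] at h
  have h1 := h.1
  have h2 := h.2
  rw [h1] at h2
  exact (sub_right_injective h2)

lemma summable_ite {α : Type*} {Sa : α → ℝ} (hSa : Summable Sa) (h0 : ∀ k, 0 ≤ Sa k)
    (P : α → Prop) [DecidablePred P] : Summable (fun k => if P k then Sa k else 0) :=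
  Summable.of_nonneg_of_le (fun k => by by_cases h : P k <;> simp [h, h0 k])
    (fun k => by by_cases h : P k <;> simp [h, h0 k]) hSa

lemma quantile_prop (β : ℝ) (hβ : 1 ≤ β) (a : ℤ × ℤ → ℂ)
    (hsum : Summable (fun k => ‖a k‖ ^ 2)) (ha0 : a 0 = 0) (hane : a ≠ 0)
    (M : ℕ) (hM : specQuantile β a ≤ M) :
    (∑' k : ℤ × ℤ, if (M : ℝ) ^ 2 < nsq k then ‖a k‖ ^ 2 else 0) ≤
      β ^ 2 * ∑' k : ℤ × ℤ, if k ≠ 0 ∧ nsq k ≤ (M : ℝ) ^ 2 then ‖a k‖ ^ 2 else 0 := by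
  classical
  set Sa : ℤ × ℤ → ℝ := fun k => ‖a k‖ ^ 2 with hSadef
  have hSa0 : ∀ k, 0 ≤ Sa k := fun k => by positivity
  have hsumSa : Summable Sa := hsum
  obtain ⟨m₀, hm₀⟩ : ∃ m, a m ≠ 0 := by
    by_contra h; push_neg at h; exact hane (funext fun k => h k)
  have hm₀0 : m₀ ≠ 0 := fun h => hm₀ (by rw [h, ha0])
  have hSam₀ : 0 < Sa m₀ := by
    have h1 : 0 < ‖a m₀‖ := norm_pos_iff.mpr hm₀
    exact pow_pos h1 2
  have hβ2 : (0:ℝ) < β ^ 2 := by nlinarith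
  have hε : 0 < β ^ 2 * Sa m₀ := mul_pos hβ2 hSam₀
  obtain ⟨s₀, hs₀⟩ := Filter.eventually_atTop.mp
    ((Metric.tendsto_nhds.mp hsumSa.hasSum) _ hε)
  set s : Finset (ℤ × ℤ) := insert m₀ s₀ with hsdef
  have hss : dist (∑ k ∈ s, Sa k) (∑' k, Sa k) < β ^ 2 * Sa m₀ :=
    hs₀ s (Finset.subset_insert _ _)
  set N : ℕ := (Finset.sup s (fun k => k.1.natAbs + k.2.natAbs)) + 1 with hNdef
  have hN1 : 1 ≤ N := Nat.le_add_left 1 _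
  have hmem_le : ∀ k ∈ s, nsq k ≤ (N : ℝ) ^ 2 := by
    intro k hk
    have h1 : k.1.natAbs + k.2.natAbs ≤ N := by
      have h2 := Finset.le_sup (f := fun k : ℤ × ℤ => k.1.natAbs + k.2.natAbs) hk
      rw [hNdef]
      omega
    have h1R : ((k.1.natAbs : ℝ) + (k.2.natAbs : ℝ)) ≤ (N : ℝ) := by exact_mod_cast h1
    have e1 : ((k.1.natAbs : ℝ)) ^ 2 = (k.1 : ℝ) ^ 2 := by
      rw [Nat.cast_natAbs]; push_cast; exact sq_abs _
    have e2 : ((k.2.natAbs : ℝ)) ^ 2 = (k.2 : ℝ) ^ 2 := by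
      rw [Nat.cast_natAbs]; push_cast; exact sq_abs _
    have p1 : (0:ℝ) ≤ (k.1.natAbs : ℝ) := Nat.cast_nonneg _
    have p2 : (0:ℝ) ≤ (k.2.natAbs : ℝ) := Nat.cast_nonneg _
    unfold nsq
    nlinarith [mul_nonneg p1 p2]
  -- tail at N is small
  have hsum_head : Summable (fun k => if nsq k ≤ (N : ℝ) ^ 2 then Sa k else 0) :=
    summable_ite hsumSa hSa0 _
  have htailN : (∑' k, if (N : ℝ) ^ 2 < nsq k then Sa k else 0)
      = (∑' k, Sa k) - ∑' k, (if nsq k ≤ (N : ℝ) ^ 2 then Sa k else 0) := by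
    have hfe : (fun k : ℤ × ℤ => if (N : ℝ) ^ 2 < nsq k then Sa k else 0)
        = fun k => Sa k - (if nsq k ≤ (N : ℝ) ^ 2 then Sa k else 0) := by
      funext k
      rcases le_or_gt (nsq k) ((N : ℝ) ^ 2) with h | h
      · simp [h, not_lt.mpr h]
      · simp [h, not_le.mpr h]
    rw [hfe, Summable.tsum_sub hsumSa hsum_head]
  have hheadfull : ∑ k ∈ s, Sa k ≤ ∑' k, (if nsq k ≤ (N : ℝ) ^ 2 then Sa k else 0) := by
    have he : ∑ k ∈ s, Sa k = ∑ k ∈ s, (if nsq k ≤ (N : ℝ) ^ 2 then Sa k else 0) :=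
      Finset.sum_congr rfl (fun k hk => by rw [if_pos (hmem_le k hk)])
    rw [he]
    exact Summable.sum_le_tsum s (fun k _ => by by_cases h : nsq k ≤ (N:ℝ)^2 <;> simp [h, hSa0 k])
      hsum_head
  have hdist : (∑' k, Sa k) - ∑ k ∈ s, Sa k < β ^ 2 * Sa m₀ := by
    rw [Real.dist_eq] at hss
    have := abs_lt.mp hss
    linarith [this.1]
  have htail_lt : (∑' k, if (N : ℝ) ^ 2 < nsq k then Sa k else 0) < β ^ 2 * Sa m₀ := by
    rw [htailN]; linarith
  have hhead_ge : Sa m₀ ≤ ∑' k, (if k ≠ 0 ∧ nsq k ≤ (N : ℝ) ^ 2 then Sa k else 0) := by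
    have h := Summable.le_tsum (summable_ite hsumSa hSa0 (fun k => k ≠ 0 ∧ nsq k ≤ (N : ℝ) ^ 2)) m₀
      (fun j _ => by by_cases h : (j ≠ 0 ∧ nsq j ≤ (N:ℝ)^2) <;> simp [h, hSa0 j])
    rwa [if_pos ⟨hm₀0, hmem_le m₀ (Finset.mem_insert_self _ _)⟩] at h
  have hNmem : N ∈ {N : ℕ | 1 ≤ N ∧
      (∑' k : ℤ × ℤ, if (N : ℝ) ^ 2 < nsq k then ‖a k‖ ^ 2 else 0) ≤
        β ^ 2 * ∑' k : ℤ × ℤ, if k ≠ 0 ∧ nsq k ≤ (N : ℝ) ^ 2 then ‖a k‖ ^ 2 else 0} := by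
    refine ⟨hN1, ?_⟩
    have h2 : β ^ 2 * Sa m₀ ≤ β ^ 2 * ∑' k, (if k ≠ 0 ∧ nsq k ≤ (N : ℝ) ^ 2 then Sa k else 0) :=
      mul_le_mul_of_nonneg_left hhead_ge (le_of_lt hβ2)
    exact le_trans (le_of_lt htail_lt) h2
  have hmem : specQuantile β a ∈ {N : ℕ | 1 ≤ N ∧
      (∑' k : ℤ × ℤ, if (N : ℝ) ^ 2 < nsq k then ‖a k‖ ^ 2 else 0) ≤
        β ^ 2 * ∑' k : ℤ × ℤ, if k ≠ 0 ∧ nsq k ≤ (N : ℝ) ^ 2 then ‖a k‖ ^ 2 else 0} :=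
    Nat.sInf_mem ⟨N, hNmem⟩
  obtain ⟨hq1, hq2⟩ := hmem
  set N₀ : ℕ := specQuantile β a with hN₀def
  have hN₀M : ((N₀ : ℝ)) ^ 2 ≤ ((M : ℝ)) ^ 2 := by
    have : (N₀ : ℝ) ≤ (M : ℝ) := by exact_mod_cast hM
    have h0 : (0:ℝ) ≤ (N₀ : ℝ) := Nat.cast_nonneg _
    nlinarith
  have htailM : (∑' k : ℤ × ℤ, if (M : ℝ) ^ 2 < nsq k then Sa k else 0)
      ≤ ∑' k : ℤ × ℤ, if (N₀ : ℝ) ^ 2 < nsq k then Sa k else 0 := by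
    apply Summable.tsum_le_tsum _ (summable_ite hsumSa hSa0 _) (summable_ite hsumSa hSa0 _)
    intro k
    by_cases h : (M : ℝ) ^ 2 < nsq k
    · rw [if_pos h, if_pos (lt_of_le_of_lt hN₀M h)]
    · rw [if_neg h]
      by_cases h' : (N₀ : ℝ) ^ 2 < nsq k <;> simp [h', hSa0 k]
  have hheadM : (∑' k : ℤ × ℤ, if k ≠ 0 ∧ nsq k ≤ (N₀ : ℝ) ^ 2 then Sa k else 0)
      ≤ ∑' k : ℤ × ℤ, if k ≠ 0 ∧ nsq k ≤ (M : ℝ) ^ 2 then Sa k else 0 := by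
    apply Summable.tsum_le_tsum _ (summable_ite hsumSa hSa0 _) (summable_ite hsumSa hSa0 _)
    intro k
    by_cases h : (k ≠ 0 ∧ nsq k ≤ (N₀ : ℝ) ^ 2)
    · rw [if_pos h, if_pos ⟨h.1, le_trans h.2 hN₀M⟩]
    · rw [if_neg h]
      by_cases h' : (k ≠ 0 ∧ nsq k ≤ (M : ℝ) ^ 2) <;> simp [h', hSa0 k]
  calc (∑' k : ℤ × ℤ, if (M : ℝ) ^ 2 < nsq k then Sa k else 0)
      ≤ ∑' k : ℤ × ℤ, if (N₀ : ℝ) ^ 2 < nsq k then Sa k else 0 := htailM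
    _ ≤ β ^ 2 * ∑' k : ℤ × ℤ, if k ≠ 0 ∧ nsq k ≤ (N₀ : ℝ) ^ 2 then Sa k else 0 := hq2
    _ ≤ β ^ 2 * ∑' k : ℤ × ℤ, if k ≠ 0 ∧ nsq k ≤ (M : ℝ) ^ 2 then Sa k else 0 :=
        mul_le_mul_of_nonneg_left hheadM (le_of_lt hβ2)

lemma per_term (𝔞 : ℝ) (h𝔞 : 10 < 𝔞) (κ B T : ℝ) (hκ0 : 0 < κ) (hκ1 : κ ≤ 1)
    (hB : 4 ≤ B) (hT1 : (κ * B)⁻¹ / 12 ≤ T) (hT2 : κ * T ≤ 𝔞 / 2 + 5)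
    (a : ℤ × ℤ → ℂ) (m : ℤ × ℤ) (hm : m ≠ 0) (hmB : nsq m ≤ B) :
    (4 : ℝ) ^ (-((𝔞 + 2) / 2)) * Real.exp (-(2 * (𝔞 / 2 + 5) + 2)) / 27648 *
        (κ⁻¹ * (B ^ 3)⁻¹) * ((nsq m) ^ (-(𝔞 / 2)) * ‖a m‖ ^ 2) ≤
      (dotp (chooseL m) (perp (chooseL m - m))) ^ 2 * ‖a m‖ ^ 2 *
        (nsq (chooseL m - m)) ^ (-((𝔞 + 2) / 2)) *
        ∫ s in (0 : ℝ)..T,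
          (∫ r in s..T,
            Real.exp (-κ * nsq (chooseL m) * (T - r)) * Real.exp (-κ * nsq m * r) *
              Real.exp (-nsq (chooseL m - m) * (r - s))) ^ 2 := by
  obtain ⟨hL0, hL1, hk0, hkL, hdot, hk4⟩ := chooseL_spec m hm
  have h1m : 1 ≤ nsq m := one_le_nsq m hm
  have hk1 : 1 ≤ nsq (chooseL m - m) := one_le_nsq _ hk0
  have he : -((𝔞 + 2) / 2) ≤ 0 := by linarith
  have hWk : (4 * nsq m) ^ (-((𝔞 + 2) / 2)) ≤ (nsq (chooseL m - m)) ^ (-((𝔞 + 2) / 2)) :=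
    Real.rpow_le_rpow_of_nonpos (by linarith) hk4 he
  have hsplit : (4 * nsq m) ^ (-((𝔞 + 2) / 2))
      = (4 : ℝ) ^ (-((𝔞 + 2) / 2)) * ((nsq m) ^ (-(𝔞 / 2)) * (nsq m)⁻¹) := by
    rw [Real.mul_rpow (by norm_num) (by linarith)]
    congr 1
    rw [show -((𝔞 + 2) / 2) = -(𝔞 / 2) + (-1) by ring,
      Real.rpow_add (by linarith : (0:ℝ) < nsq m), Real.rpow_neg_one]
  have hQ0 : (0:ℝ) < (4 : ℝ) ^ (-((𝔞 + 2) / 2)) := Real.rpow_pos_of_pos (by norm_num) _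
  have hw0 : (0:ℝ) ≤ (nsq m) ^ (-(𝔞 / 2)) := Real.rpow_nonneg (by linarith) _
  have hWk0 : (0:ℝ) ≤ (nsq (chooseL m - m)) ^ (-((𝔞 + 2) / 2)) :=
    Real.rpow_nonneg (by linarith) _
  have hA1 : (4 : ℝ) ^ (-((𝔞 + 2) / 2)) / 2 * (nsq m) ^ (-(𝔞 / 2))
      ≤ (dotp (chooseL m) (perp (chooseL m - m))) ^ 2
        * (nsq (chooseL m - m)) ^ (-((𝔞 + 2) / 2)) := by
    have step : (nsq m / 2) * ((4 * nsq m) ^ (-((𝔞 + 2) / 2)))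
        ≤ (dotp (chooseL m) (perp (chooseL m - m))) ^ 2
          * (nsq (chooseL m - m)) ^ (-((𝔞 + 2) / 2)) :=
      mul_le_mul (by linarith) hWk (Real.rpow_nonneg (by linarith) _) (sq_nonneg _)
    have heq : (nsq m / 2) * ((4 * nsq m) ^ (-((𝔞 + 2) / 2)))
        = (4 : ℝ) ^ (-((𝔞 + 2) / 2)) / 2 * (nsq m) ^ (-(𝔞 / 2)) * (nsq m * (nsq m)⁻¹) := by
      rw [hsplit]; ring
    rw [mul_inv_cancel₀ (by linarith : nsq m ≠ 0), mul_one] at heq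
    linarith [step, heq]
  have hI := core_integral κ B (nsq (chooseL m)) (nsq m) (nsq (chooseL m - m)) T (𝔞 / 2 + 5)
    hκ0 hκ1 hB (nsq_nonneg _) (le_of_eq hL1) (by linarith) hmB (by linarith)
    (by linarith) (by linarith) hT1 hT2
  have hI0 : (0:ℝ) ≤ Real.exp (-(2 * (𝔞 / 2 + 5) + 2)) / 13824 * (κ⁻¹ * (B ^ 3)⁻¹) := by
    positivity
  have hna : (0:ℝ) ≤ ‖a m‖ ^ 2 := by positivity
  calc (4 : ℝ) ^ (-((𝔞 + 2) / 2)) * Real.exp (-(2 * (𝔞 / 2 + 5) + 2)) / 27648 *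
        (κ⁻¹ * (B ^ 3)⁻¹) * ((nsq m) ^ (-(𝔞 / 2)) * ‖a m‖ ^ 2)
      = ((4 : ℝ) ^ (-((𝔞 + 2) / 2)) / 2 * (nsq m) ^ (-(𝔞 / 2)) * ‖a m‖ ^ 2) *
          (Real.exp (-(2 * (𝔞 / 2 + 5) + 2)) / 13824 * (κ⁻¹ * (B ^ 3)⁻¹)) := by ring
    _ ≤ ((dotp (chooseL m) (perp (chooseL m - m))) ^ 2
          * (nsq (chooseL m - m)) ^ (-((𝔞 + 2) / 2)) * ‖a m‖ ^ 2) *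
          ∫ s in (0 : ℝ)..T,
            (∫ r in s..T,
              Real.exp (-κ * nsq (chooseL m) * (T - r)) * Real.exp (-κ * nsq m * r) *
                Real.exp (-nsq (chooseL m - m) * (r - s))) ^ 2 := by
        apply mul_le_mul (mul_le_mul_of_nonneg_right hA1 hna) hI hI0
        have : (0:ℝ) ≤ (dotp (chooseL m) (perp (chooseL m - m))) ^ 2
            * (nsq (chooseL m - m)) ^ (-((𝔞 + 2) / 2)) :=
          mul_nonneg (sq_nonneg _) hWk0
        exact mul_nonneg this hna
    _ = (dotp (chooseL m) (perp (chooseL m - m))) ^ 2 * ‖a m‖ ^ 2 *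
          (nsq (chooseL m - m)) ^ (-((𝔞 + 2) / 2)) *
          ∫ s in (0 : ℝ)..T,
            (∫ r in s..T,
              Real.exp (-κ * nsq (chooseL m) * (T - r)) * Real.exp (-κ * nsq m * r) *
                Real.exp (-nsq (chooseL m - m) * (r - s))) ^ 2 := by ring

set_option maxHeartbeats 2000000 in
/-- Deterministic content of Lemma 4.1 (advection–diffusion Gaussian lower bound): with
`λ = 𝔞/2 + 5` and `T = λ κ⁻¹ M⁻² log M`, for `M ≥ max(2, M^{(β)}(a))`,
`∑_{0<|ℓ|≤1} ∑_{k≠0, k≠ℓ} ⟨ℓ,k⊥⟩² |a(ℓ−k)|² |k|^{−(𝔞+2)}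
   ∫₀ᵀ (∫ₛᵀ e^{−κ|ℓ|²(T−r)} e^{−κ|ℓ−k|² r} e^{−|k|²(r−s)} dr)² ds
 ≥ c κ⁻¹ M⁻⁶ ∑_{m≠0} |m|^{−𝔞} |a m|²`. -/
theorem gaussian_lower_bound_advection (𝔞 : ℝ) (h𝔞 : 10 < 𝔞) (β : ℝ) (hβ : 1 ≤ β) :
    ∃ c : ℝ, 0 < c ∧
      ∀ κ : ℝ, κ ∈ Set.Ioc (0 : ℝ) 1 →
      ∀ a : ℤ × ℤ → ℂ, Summable (fun k => ‖a k‖ ^ 2) → a 0 = 0 → a ≠ 0 →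
      ∀ M : ℕ, 2 ≤ M → specQuantile β a ≤ M →
      ∀ T : ℝ, T = (𝔞 / 2 + 5) * κ⁻¹ * ((M : ℝ) ^ 2)⁻¹ * Real.log M →
      ENNReal.ofReal (c * κ⁻¹ * ((M : ℝ) ^ 6)⁻¹) *
          (∑' m : ℤ × ℤ,
            if m ≠ 0 then ENNReal.ofReal ((nsq m) ^ (-(𝔞 / 2)) * ‖a m‖ ^ 2) else 0) ≤
        ∑' ℓ : ℤ × ℤ, ∑' k : ℤ × ℤ,
          (if ℓ ≠ 0 ∧ nsq ℓ ≤ 1 ∧ k ≠ 0 ∧ k ≠ ℓ then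
            ENNReal.ofReal
              ((dotp ℓ (perp k)) ^ 2 * ‖a (ℓ - k)‖ ^ 2 * (nsq k) ^ (-((𝔞 + 2) / 2)) *
                ∫ s in (0 : ℝ)..T,
                  (∫ r in s..T,
                    Real.exp (-κ * nsq ℓ * (T - r)) * Real.exp (-κ * nsq (ℓ - k) * r) *
                      Real.exp (-nsq k * (r - s))) ^ 2)
          else 0) := by
  classical
  have hc₀pos : (0:ℝ) < (4 : ℝ) ^ (-((𝔞 + 2) / 2)) * Real.exp (-(2 * (𝔞 / 2 + 5) + 2)) / 27648 := by
    have h4 : (0:ℝ) < (4 : ℝ) ^ (-((𝔞 + 2) / 2)) := Real.rpow_pos_of_pos (by norm_num) _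
    have he : (0:ℝ) < Real.exp (-(2 * (𝔞 / 2 + 5) + 2)) := Real.exp_pos _
    positivity
  have h1β : (0:ℝ) < 1 + β ^ 2 := by nlinarith
  refine ⟨(4 : ℝ) ^ (-((𝔞 + 2) / 2)) * Real.exp (-(2 * (𝔞 / 2 + 5) + 2)) / 27648 / (1 + β ^ 2),
    div_pos hc₀pos h1β, ?_⟩
  intro κ hκ a hsum ha0 hane M hM2 hMq T hTdef
  obtain ⟨hκ0, hκ1⟩ := hκ
  set c₀ : ℝ := (4 : ℝ) ^ (-((𝔞 + 2) / 2)) * Real.exp (-(2 * (𝔞 / 2 + 5) + 2)) / 27648 with hc₀def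
  set K : ℝ := κ⁻¹ * ((M : ℝ) ^ 6)⁻¹ with hKdef
  have hK0 : 0 ≤ K := by rw [hKdef]; positivity
  -- basic numerics
  have hMR : (2:ℝ) ≤ (M:ℝ) := by exact_mod_cast hM2
  set B : ℝ := ((M:ℝ)) ^ 2 with hBdef
  have hB4 : (4:ℝ) ≤ B := by rw [hBdef]; nlinarith
  have hB0 : (0:ℝ) < B := by linarith
  have hM6 : ((M:ℝ) ^ 6)⁻¹ = (B ^ 3)⁻¹ := by rw [hBdef]; ring_nf
  have hlog : (0.69:ℝ) ≤ Real.log M := by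
    have h2 := Real.log_two_gt_d9
    have h3 := Real.log_le_log (by norm_num : (0:ℝ) < 2) hMR
    linarith
  have h10 : (10:ℝ) ≤ 𝔞 / 2 + 5 := by linarith
  have hT1 : (κ * B)⁻¹ / 12 ≤ T := by
    rw [hTdef, mul_inv]
    have hx : (0:ℝ) < κ⁻¹ * B⁻¹ := by positivity
    have key : 0 ≤ ((𝔞 / 2 + 5) * Real.log M - 1 / 12) * (κ⁻¹ * B⁻¹) :=
      mul_nonneg (by nlinarith) hx.le
    nlinarith [key]
  have hT2 : κ * T ≤ 𝔞 / 2 + 5 := by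
    rw [hTdef]
    have hκκ : κ * κ⁻¹ = 1 := mul_inv_cancel₀ (ne_of_gt hκ0)
    have hlogB : Real.log M ≤ B := by
      have h := Real.log_le_sub_one_of_pos (show (0:ℝ) < (M:ℝ) by linarith)
      rw [hBdef]; nlinarith
    have hBB : Real.log M * B⁻¹ ≤ 1 := by
      have h := mul_le_mul_of_nonneg_right hlogB (inv_nonneg.mpr hB0.le)
      rw [mul_inv_cancel₀ (ne_of_gt hB0)] at h
      exact h
    calc κ * ((𝔞 / 2 + 5) * κ⁻¹ * B⁻¹ * Real.log M)
        = (𝔞 / 2 + 5) * (κ * κ⁻¹) * (Real.log M * B⁻¹) := by ring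
      _ = (𝔞 / 2 + 5) * (Real.log M * B⁻¹) := by rw [hκκ]; ring
      _ ≤ (𝔞 / 2 + 5) * 1 := mul_le_mul_of_nonneg_left hBB (by linarith)
      _ = 𝔞 / 2 + 5 := mul_one _
  -- real-valued weighted sums
  have hSa0 : ∀ m : ℤ × ℤ, (0:ℝ) ≤ ‖a m‖ ^ 2 := fun m => by positivity
  have hw0 : ∀ m : ℤ × ℤ, (0:ℝ) ≤ (nsq m) ^ (-(𝔞 / 2)) :=
    fun m => Real.rpow_nonneg (nsq_nonneg m) _
  have hw1 : ∀ m : ℤ × ℤ, m ≠ 0 → (nsq m) ^ (-(𝔞 / 2)) ≤ 1 :=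
    fun m hm => Real.rpow_le_one_of_one_le_of_nonpos (one_le_nsq m hm) (by linarith)
  have hwSa_nonneg : ∀ (P : ℤ × ℤ → Prop) [DecidablePred P], ∀ m : ℤ × ℤ,
      (0:ℝ) ≤ (if P m then (nsq m) ^ (-(𝔞 / 2)) * ‖a m‖ ^ 2 else 0) := by
    intro P _ m
    by_cases h : P m
    · simp only [if_pos h]; exact mul_nonneg (hw0 m) (hSa0 m)
    · simp [h]
  have hsum_wP : ∀ (P : ℤ × ℤ → Prop) [DecidablePred P], (∀ m, P m → m ≠ 0) →
      Summable (fun m : ℤ × ℤ => if P m then (nsq m) ^ (-(𝔞 / 2)) * ‖a m‖ ^ 2 else 0) := by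
    intro P _ hP
    apply Summable.of_nonneg_of_le (hwSa_nonneg P) _ hsum
    intro m
    by_cases h : P m
    · simp only [if_pos h]
      calc (nsq m) ^ (-(𝔞 / 2)) * ‖a m‖ ^ 2 ≤ 1 * ‖a m‖ ^ 2 :=
            mul_le_mul_of_nonneg_right (hw1 m (hP m h)) (hSa0 m)
        _ = ‖a m‖ ^ 2 := one_mul _
    · simp only [if_neg h]; exact hSa0 m
  have hsumSR : Summable (fun m : ℤ × ℤ =>
      if m ≠ 0 then (nsq m) ^ (-(𝔞 / 2)) * ‖a m‖ ^ 2 else 0) :=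
    hsum_wP _ (fun m h => h)
  have hsumHW : Summable (fun m : ℤ × ℤ =>
      if m ≠ 0 ∧ nsq m ≤ B then (nsq m) ^ (-(𝔞 / 2)) * ‖a m‖ ^ 2 else 0) :=
    hsum_wP _ (fun m h => h.1)
  have hsumTW : Summable (fun m : ℤ × ℤ =>
      if m ≠ 0 ∧ B < nsq m then (nsq m) ^ (-(𝔞 / 2)) * ‖a m‖ ^ 2 else 0) :=
    hsum_wP _ (fun m h => h.1)
  set SR : ℝ := ∑' m : ℤ × ℤ, (if m ≠ 0 then (nsq m) ^ (-(𝔞 / 2)) * ‖a m‖ ^ 2 else 0) with hSRdef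
  set HW : ℝ := ∑' m : ℤ × ℤ,
    (if m ≠ 0 ∧ nsq m ≤ B then (nsq m) ^ (-(𝔞 / 2)) * ‖a m‖ ^ 2 else 0) with hHWdef
  set TW : ℝ := ∑' m : ℤ × ℤ,
    (if m ≠ 0 ∧ B < nsq m then (nsq m) ^ (-(𝔞 / 2)) * ‖a m‖ ^ 2 else 0) with hTWdef
  have hHW0 : 0 ≤ HW := tsum_nonneg (hwSa_nonneg _)
  have hSRsplit : SR = HW + TW := by
    rw [hSRdef, hHWdef, hTWdef, ← Summable.tsum_add hsumHW hsumTW]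
    apply tsum_congr
    intro m
    by_cases h1 : m = 0
    · simp [h1]
    · by_cases h2 : nsq m ≤ B
      · simp [h1, h2, not_lt.mpr h2]
      · simp [h1, h2, not_le.mp h2]
  -- tail estimate via the quantile
  have hq := quantile_prop β hβ a hsum ha0 hane M hMq
  rw [← hBdef] at hq
  have hsum_tail : Summable (fun k : ℤ × ℤ => if B < nsq k then ‖a k‖ ^ 2 else 0) :=
    summable_ite hsum hSa0 _
  have hsum_head : Summable (fun k : ℤ × ℤ => if k ≠ 0 ∧ nsq k ≤ B then ‖a k‖ ^ 2 else 0) :=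
    summable_ite hsum hSa0 _
  have hTWle : TW ≤ B ^ (-(𝔞 / 2)) *
      ∑' k : ℤ × ℤ, (if B < nsq k then ‖a k‖ ^ 2 else 0) := by
    rw [hTWdef, ← tsum_mul_left]
    apply Summable.tsum_le_tsum _ hsumTW (hsum_tail.mul_left _)
    intro m
    by_cases h : m ≠ 0 ∧ B < nsq m
    · rw [if_pos h, if_pos h.2]
      apply mul_le_mul_of_nonneg_right _ (hSa0 m)
      exact Real.rpow_le_rpow_of_nonpos hB0 (le_of_lt h.2) (by linarith)
    · rw [if_neg h]
      by_cases h2 : B < nsq m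
      · rw [if_pos h2]
        exact mul_nonneg (Real.rpow_nonneg hB0.le _) (hSa0 m)
      · rw [if_neg h2, mul_zero]
  have hheadle : (∑' k : ℤ × ℤ, (if k ≠ 0 ∧ nsq k ≤ B then ‖a k‖ ^ 2 else 0))
      ≤ B ^ (𝔞 / 2) * HW := by
    rw [hHWdef, ← tsum_mul_left]
    apply Summable.tsum_le_tsum _ hsum_head ((hsum_wP _ (fun m h => h.1)).mul_left _)
    intro m
    by_cases h : m ≠ 0 ∧ nsq m ≤ B
    · rw [if_pos h, if_pos h]
      have hnm0 : (0:ℝ) < nsq m := lt_of_lt_of_le zero_lt_one (one_le_nsq m h.1)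
      have hwm : B ^ (-(𝔞 / 2)) ≤ (nsq m) ^ (-(𝔞 / 2)) :=
        Real.rpow_le_rpow_of_nonpos hnm0 h.2 (by linarith)
      have hcancel : B ^ (𝔞 / 2) * B ^ (-(𝔞 / 2)) = 1 := by
        rw [← Real.rpow_add hB0]; simp
      calc ‖a m‖ ^ 2 = (B ^ (𝔞 / 2) * B ^ (-(𝔞 / 2))) * ‖a m‖ ^ 2 := by rw [hcancel, one_mul]
        _ ≤ (B ^ (𝔞 / 2) * (nsq m) ^ (-(𝔞 / 2))) * ‖a m‖ ^ 2 := by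
            apply mul_le_mul_of_nonneg_right _ (hSa0 m)
            exact mul_le_mul_of_nonneg_left hwm (Real.rpow_nonneg hB0.le _)
        _ = B ^ (𝔞 / 2) * ((nsq m) ^ (-(𝔞 / 2)) * ‖a m‖ ^ 2) := by ring
    · rw [if_neg h, if_neg h, mul_zero]
  have hβ2 : (0:ℝ) ≤ β ^ 2 := sq_nonneg β
  have hTWβ : TW ≤ β ^ 2 * HW := by
    have h1 : TW ≤ B ^ (-(𝔞 / 2)) * (β ^ 2 *
        ∑' k : ℤ × ℤ, (if k ≠ 0 ∧ nsq k ≤ B then ‖a k‖ ^ 2 else 0)) := by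
      refine le_trans hTWle (mul_le_mul_of_nonneg_left hq (Real.rpow_nonneg hB0.le _))
    have h2 : B ^ (-(𝔞 / 2)) * (β ^ 2 *
        ∑' k : ℤ × ℤ, (if k ≠ 0 ∧ nsq k ≤ B then ‖a k‖ ^ 2 else 0))
        ≤ B ^ (-(𝔞 / 2)) * (β ^ 2 * (B ^ (𝔞 / 2) * HW)) := by
      apply mul_le_mul_of_nonneg_left _ (Real.rpow_nonneg hB0.le _)
      exact mul_le_mul_of_nonneg_left hheadle hβ2
    have h3 : B ^ (-(𝔞 / 2)) * (β ^ 2 * (B ^ (𝔞 / 2) * HW))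
        = (B ^ (-(𝔞 / 2)) * B ^ (𝔞 / 2)) * (β ^ 2 * HW) := by ring
    have h4 : B ^ (-(𝔞 / 2)) * B ^ (𝔞 / 2) = 1 := by rw [← Real.rpow_add hB0]; simp
    rw [h3, h4, one_mul] at h2
    linarith
  have hSRle : SR ≤ (1 + β ^ 2) * HW := by rw [hSRsplit]; nlinarith
  -- ENNReal reduction
  have hSE : (∑' m : ℤ × ℤ,
      if m ≠ 0 then ENNReal.ofReal ((nsq m) ^ (-(𝔞 / 2)) * ‖a m‖ ^ 2) else 0)
      = ENNReal.ofReal SR := by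
    have h1 : ∀ m : ℤ × ℤ,
        (if m ≠ 0 then ENNReal.ofReal ((nsq m) ^ (-(𝔞 / 2)) * ‖a m‖ ^ 2) else 0)
        = ENNReal.ofReal (if m ≠ 0 then (nsq m) ^ (-(𝔞 / 2)) * ‖a m‖ ^ 2 else 0) := by
      intro m; by_cases h : m = 0 <;> simp [h]
    rw [tsum_congr h1, hSRdef, ENNReal.ofReal_tsum_of_nonneg (hwSa_nonneg _) hsumSR]
  rw [hSE]
  have hc0K : (0:ℝ) ≤ c₀ / (1 + β ^ 2) * κ⁻¹ * ((M : ℝ) ^ 6)⁻¹ :=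
    mul_nonneg (mul_nonneg (div_nonneg hc₀pos.le h1β.le) (inv_nonneg.mpr hκ0.le))
      (inv_nonneg.mpr (by positivity))
  rw [← ENNReal.ofReal_mul hc0K]
  -- the real inequality between constants
  have hmain_real : c₀ / (1 + β ^ 2) * κ⁻¹ * ((M : ℝ) ^ 6)⁻¹ * SR ≤ c₀ * K * HW := by
    have step := mul_le_mul_of_nonneg_left hSRle
      (show (0:ℝ) ≤ c₀ * K / (1 + β ^ 2) from
        div_nonneg (mul_nonneg hc₀pos.le hK0) h1β.le)
    calc c₀ / (1 + β ^ 2) * κ⁻¹ * ((M : ℝ) ^ 6)⁻¹ * SR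
        = c₀ * K / (1 + β ^ 2) * SR := by rw [hKdef]; ring
      _ ≤ c₀ * K / (1 + β ^ 2) * ((1 + β ^ 2) * HW) := step
      _ = c₀ * K * HW := by field_simp
  -- sum of pointwise lower bounds
  have hHm : ∀ m : ℤ × ℤ,
      ENNReal.ofReal (if m ≠ 0 ∧ nsq m ≤ B then
        c₀ * K * ((nsq m) ^ (-(𝔞 / 2)) * ‖a m‖ ^ 2) else 0) ≤
      (fun p : (ℤ × ℤ) × (ℤ × ℤ) =>
        if p.1 ≠ 0 ∧ nsq p.1 ≤ 1 ∧ p.2 ≠ 0 ∧ p.2 ≠ p.1 then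
          ENNReal.ofReal
            ((dotp p.1 (perp p.2)) ^ 2 * ‖a (p.1 - p.2)‖ ^ 2 * (nsq p.2) ^ (-((𝔞 + 2) / 2)) *
              ∫ s in (0 : ℝ)..T,
                (∫ r in s..T,
                  Real.exp (-κ * nsq p.1 * (T - r)) * Real.exp (-κ * nsq (p.1 - p.2) * r) *
                    Real.exp (-nsq p.2 * (r - s))) ^ 2)
        else 0) ((fun m : ℤ × ℤ => (chooseL m, chooseL m - m)) m) := by
    intro m
    simp only
    by_cases hc : m ≠ 0 ∧ nsq m ≤ B
    · obtain ⟨hL0, hL1, hk0, hkL, hdot, hk4⟩ := chooseL_spec m hc.1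
      rw [if_pos hc, if_pos ⟨hL0, le_of_eq hL1, hk0, hkL⟩]
      apply ENNReal.ofReal_le_ofReal
      have hmm : chooseL m - (chooseL m - m) = m := sub_sub_cancel _ _
      rw [hmm]
      have := per_term 𝔞 h𝔞 κ B T hκ0 hκ1 hB4 hT1 hT2 a m hc.1 hc.2
      calc c₀ * K * ((nsq m) ^ (-(𝔞 / 2)) * ‖a m‖ ^ 2)
          = (4 : ℝ) ^ (-((𝔞 + 2) / 2)) * Real.exp (-(2 * (𝔞 / 2 + 5) + 2)) / 27648 *
            (κ⁻¹ * (B ^ 3)⁻¹) * ((nsq m) ^ (-(𝔞 / 2)) * ‖a m‖ ^ 2) := by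
            rw [hc₀def, hKdef, hM6]
            try ring
        _ ≤ _ := this
    · rw [if_neg hc]
      simp only [ENNReal.ofReal_zero]
      exact zero_le
  -- assemble
  calc ENNReal.ofReal (c₀ / (1 + β ^ 2) * κ⁻¹ * ((M : ℝ) ^ 6)⁻¹ * SR)
      ≤ ENNReal.ofReal (c₀ * K * HW) := ENNReal.ofReal_le_ofReal hmain_real
    _ = ∑' m : ℤ × ℤ, ENNReal.ofReal (if m ≠ 0 ∧ nsq m ≤ B then
          c₀ * K * ((nsq m) ^ (-(𝔞 / 2)) * ‖a m‖ ^ 2) else 0) := by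
        have h1 : ∀ m : ℤ × ℤ, (if m ≠ 0 ∧ nsq m ≤ B then
            c₀ * K * ((nsq m) ^ (-(𝔞 / 2)) * ‖a m‖ ^ 2) else 0)
            = c₀ * K * (if m ≠ 0 ∧ nsq m ≤ B then (nsq m) ^ (-(𝔞 / 2)) * ‖a m‖ ^ 2 else 0) := by
          intro m; by_cases h : m ≠ 0 ∧ nsq m ≤ B <;> simp [h]
        rw [tsum_congr (fun m => congrArg ENNReal.ofReal (h1 m))]
        rw [← ENNReal.ofReal_tsum_of_nonneg
          (fun m => mul_nonneg (mul_nonneg hc₀pos.le hK0)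
            (hwSa_nonneg (fun m => m ≠ 0 ∧ nsq m ≤ B) m)) (hsumHW.mul_left _)]
        rw [tsum_mul_left, hHWdef]
    _ ≤ ∑' m : ℤ × ℤ, (fun p : (ℤ × ℤ) × (ℤ × ℤ) =>
          if p.1 ≠ 0 ∧ nsq p.1 ≤ 1 ∧ p.2 ≠ 0 ∧ p.2 ≠ p.1 then
            ENNReal.ofReal
              ((dotp p.1 (perp p.2)) ^ 2 * ‖a (p.1 - p.2)‖ ^ 2 *
                (nsq p.2) ^ (-((𝔞 + 2) / 2)) *
                ∫ s in (0 : ℝ)..T,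
                  (∫ r in s..T,
                    Real.exp (-κ * nsq p.1 * (T - r)) * Real.exp (-κ * nsq (p.1 - p.2) * r) *
                      Real.exp (-nsq p.2 * (r - s))) ^ 2)
          else 0) ((fun m : ℤ × ℤ => (chooseL m, chooseL m - m)) m) :=
        ENNReal.tsum_le_tsum hHm
    _ ≤ ∑' p : (ℤ × ℤ) × (ℤ × ℤ),
          (if p.1 ≠ 0 ∧ nsq p.1 ≤ 1 ∧ p.2 ≠ 0 ∧ p.2 ≠ p.1 then
            ENNReal.ofReal
              ((dotp p.1 (perp p.2)) ^ 2 * ‖a (p.1 - p.2)‖ ^ 2 *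
                (nsq p.2) ^ (-((𝔞 + 2) / 2)) *
                ∫ s in (0 : ℝ)..T,
                  (∫ r in s..T,
                    Real.exp (-κ * nsq p.1 * (T - r)) * Real.exp (-κ * nsq (p.1 - p.2) * r) *
                      Real.exp (-nsq p.2 * (r - s))) ^ 2)
          else 0) :=
        ENNReal.tsum_comp_le_tsum_of_injective g_inj _
    _ = _ := by
        rw [ENNReal.tsum_prod']
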